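/- Let $q$ be a prime power, $l$ a prime, and let $A = \{ s \in \mathbb{F}_{q^l}^\times : s^{(q^l-1)/(q-1)} = 1 \}$ be the norm-one subgroup, with $Z = A \cap \mathbb{F}_q^\times$ (so $Z = \mu_{\gcd(l, q-1)}$ consists of the $\gcd(l,q-1)$-th roots of unity in $\mathbb{F}_q$). Suppose $\theta, \eta : A \to \mathbb{C}^\times$ are characters such that $\theta^{q^i} \eta^{q^j}$ is nontrivial for all $0 \le i, j < l$, and each $\theta^{q^i}\eta^{q^j}$ is trivial on $Z$. Then $\sum_{s \in A \setminus Z} \Big(\sum_{i=0}^{l-1} \theta(s)^{q^i}\Big)\Big(\sum_{j=0}^{l-1} \eta(s)^{q^j}\Big) = -|Z| \cdot l^2$. -/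

import Mathlib

private lemma sum_eq_zero_of_ne_one' {G : Type*} [CommGroup G] [Fintype G] (f : G → ℂ)
    (hf : ∀ a b, f (a * b) = f a * f b) (s₀ : G) (h : f s₀ ≠ 1) :
    ∑ s, f s = 0 := by
  have h1 : ∑ s, f (s₀ * s) = ∑ s, f s :=
    Fintype.sum_equiv (Equiv.mulLeft s₀) _ _ (fun s => rfl)
  simp only [hf, ← Finset.mul_sum] at h1
  have h2 : (f s₀ - 1) * ∑ s, f s = 0 := by
    rw [sub_mul, one_mul, h1, sub_self]
  rcases mul_eq_zero.mp h2 with h3 | h3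
  · exact absurd (sub_eq_zero.mp h3) h
  · exact h3

open scoped Classical in
theorem stmt17 (p q l e : ℕ) (hp : p.Prime) (hq : q = p ^ e) (he : 1 ≤ e) (hl : l.Prime)
    (F : Type) [Field F] [Fintype F] (hF : Fintype.card F = q ^ l)
    (A Z : Subgroup Fˣ)
    (hA : ∀ s : Fˣ, s ∈ A ↔ s ^ ((q ^ l - 1) / (q - 1)) = 1)
    (hZ : ∀ s : Fˣ, s ∈ Z ↔ s ∈ A ∧ s ^ (q - 1) = 1)
    (θ η : A →* ℂˣ)
    (hnontriv : ∀ i < l, ∀ j < l, ∃ s : A, (θ s) ^ (q ^ i) * (η s) ^ (q ^ j) ≠ 1)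
    (htrivZ : ∀ i < l, ∀ j < l, ∀ s : A, (s : Fˣ) ∈ Z →
      (θ s) ^ (q ^ i) * (η s) ^ (q ^ j) = 1) :
    ∑ s : A, (if (s : Fˣ) ∈ Z then 0 else
        (∑ i ∈ Finset.range l, ((θ s : ℂˣ) : ℂ) ^ (q ^ i)) *
        (∑ j ∈ Finset.range l, ((η s : ℂˣ) : ℂ) ^ (q ^ j)))
      = -((Nat.card Z : ℂ) * (l : ℂ) ^ 2) := by
  set P : A → ℂ := fun s =>
    (∑ i ∈ Finset.range l, ((θ s : ℂˣ) : ℂ) ^ (q ^ i)) *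
    (∑ j ∈ Finset.range l, ((η s : ℂˣ) : ℂ) ^ (q ^ j)) with hP
  have hPexp : ∀ s : A, P s = ∑ i ∈ Finset.range l, ∑ j ∈ Finset.range l,
      ((θ s : ℂˣ) : ℂ) ^ (q ^ i) * ((η s : ℂˣ) : ℂ) ^ (q ^ j) := by
    intro s
    rw [hP]
    dsimp only
    rw [Finset.sum_mul_sum]
  -- full sum is zero
  have hfull : ∑ s : A, P s = 0 := by
    simp only [hPexp]
    rw [Finset.sum_comm]
    apply Finset.sum_eq_zero
    intro i hi
    rw [Finset.sum_comm]
    apply Finset.sum_eq_zero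
    intro j hj
    obtain ⟨s₀, hs₀⟩ := hnontriv i (Finset.mem_range.mp hi) j (Finset.mem_range.mp hj)
    refine sum_eq_zero_of_ne_one' _ ?_ s₀ ?_
    · intro a b
      simp only [map_mul, Units.val_mul, mul_pow]
      ring
    · intro hcontra
      apply hs₀
      apply Units.ext
      push_cast
      exact hcontra
  -- sum over Z part
  have hZsub : A.subtype ⁻¹' (Z : Set Fˣ) = ((Z.subgroupOf A : Subgroup A) : Set A) := rfl
  have hZcard : (Finset.univ.filter (fun s : A => (s : Fˣ) ∈ Z)).card = Nat.card Z := by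
    have hle : Z ≤ A := fun s hs => ((hZ s).mp hs).1
    have e1 : Nat.card (Z.subgroupOf A) = Nat.card Z :=
      Nat.card_congr (Subgroup.subgroupOfEquivOfLe hle).toEquiv
    rw [← e1, Nat.card_eq_fintype_card, Fintype.card_subtype]
    congr 1
  have hZpart : ∑ s : A, (if (s : Fˣ) ∈ Z then P s else 0) = (Nat.card Z : ℂ) * (l : ℂ) ^ 2 := by
    have : ∀ s : A, (if (s : Fˣ) ∈ Z then P s else 0)
        = (if (s : Fˣ) ∈ Z then ((l : ℂ) ^ 2) else 0) := by
      intro s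
      by_cases hs : (s : Fˣ) ∈ Z
      · simp only [hs, if_true]
        rw [hPexp]
        have : ∀ i ∈ Finset.range l, ∀ j ∈ Finset.range l,
            ((θ s : ℂˣ) : ℂ) ^ (q ^ i) * ((η s : ℂˣ) : ℂ) ^ (q ^ j) = 1 := by
          intro i hi j hj
          have h1 := htrivZ i (Finset.mem_range.mp hi) j (Finset.mem_range.mp hj) s hs
          have := congrArg Units.val h1
          push_cast at this
          exact this
        rw [Finset.sum_congr rfl (fun i hi => Finset.sum_congr rfl (fun j hj => this i hi j hj))]
        simp [sq]
      · simp [hs]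
    rw [Finset.sum_congr rfl (fun s _ => this s), ← Finset.sum_filter]
    simp only [Finset.sum_const, nsmul_eq_mul, hZcard]
  have hsplit : ∀ s : A, (if (s : Fˣ) ∈ Z then 0 else P s)
      = P s - (if (s : Fˣ) ∈ Z then P s else 0) := by
    intro s
    by_cases hs : (s : Fˣ) ∈ Z <;> simp [hs]
  calc ∑ s : A, (if (s : Fˣ) ∈ Z then 0 else P s)
      = ∑ s : A, (P s - (if (s : Fˣ) ∈ Z then P s else 0)) :=
        Finset.sum_congr rfl (fun s _ => hsplit s)
    _ = (∑ s : A, P s) - ∑ s : A, (if (s : Fˣ) ∈ Z then P s else 0) := Finset.sum_sub_distrib _ _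
    _ = -((Nat.card Z : ℂ) * (l : ℂ) ^ 2) := by rw [hfull, hZpart, zero_sub]
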